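/- Suppose there exist constants d₀ ≥ 1 and c_B ≥ 1 such that for every v ∈ X and all radii 0 < r < R there exists U ⊆ X with |U| ≤ c_B (R/r)^{d₀} and B_v(R) ⊆ ⋃_{u∈U} B_u(r). Let s = max_{v∈X} |B_v(1/2)| and λ = (2Q)^{d₀} c_B. Then for every integer n ≥ 0, the probability that ε contains at least one level-n chunk is at most |X| · λ^{−2} · (λ² s p)^{2^n}. -/

import Mathlib

open scoped ENNReal Classical

/-- A level-`n` chunk of the error configuration `ε`. -/
def IsChunk {X : Type*} [MetricSpace X] (Q : ℝ) (ε : Set X) : ℕ → Set X → Prop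
  | 0, C => ∃ x ∈ ε, C = {x}
  | n + 1, C => ∃ A B : Set X, IsChunk Q ε n A ∧ IsChunk Q ε n B ∧ Disjoint A B ∧
      C = A ∪ B ∧ Metric.diam C ≤ Q ^ (n + 1) / 2

/-- The Bernoulli(`p`) product measure: each point of `X` is included in the random subset
independently with probability `p` (for `p ∈ [0,1]`); a random subset is encoded as its
indicator function `f : X → Bool`, the subset being `{x | f x = true}`. -/
noncomputable def bernoulliProduct (X : Type*) [Fintype X] (p : ℝ) :
    MeasureTheory.Measure (X → Bool) :=
  MeasureTheory.Measure.pi fun _ =>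
    (PMF.bernoulli (min (Real.toNNReal p) 1) (min_le_right _ _)).toMeasure

section Aux

variable {X : Type*} [MetricSpace X] [Fintype X] {Q : ℝ} {ε : Set X}

lemma isChunk_subset : ∀ {n : ℕ} {C : Set X}, IsChunk Q ε n C → C ⊆ ε := by
  intro n
  induction n with
  | zero => rintro C ⟨x, hx, rfl⟩; simpa
  | succ m ih =>
    rintro C ⟨A, B, hA, hB, -, rfl, -⟩
    exact Set.union_subset (ih hA) (ih hB)

lemma isChunk_univ : ∀ {n : ℕ} {C : Set X}, IsChunk Q ε n C → IsChunk Q Set.univ n C := by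
  intro n
  induction n with
  | zero => rintro C ⟨x, hx, rfl⟩; exact ⟨x, trivial, rfl⟩
  | succ m ih =>
    rintro C ⟨A, B, hA, hB, hd, rfl, hdiam⟩
    exact ⟨A, B, ih hA, ih hB, hd, rfl, hdiam⟩

lemma isChunk_ncard : ∀ {n : ℕ} {C : Set X}, IsChunk Q ε n C → C.ncard = 2 ^ n := by
  intro n
  induction n with
  | zero => rintro C ⟨x, hx, rfl⟩; simp
  | succ m ih =>
    rintro C ⟨A, B, hA, hB, hd, rfl, -⟩
    rw [Set.ncard_union_eq hd (Set.toFinite A) (Set.toFinite B), ih hA, ih hB]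
    ring

lemma isChunk_nonempty {n : ℕ} {C : Set X} (h : IsChunk Q ε n C) : C.Nonempty := by
  apply Set.nonempty_of_ncard_ne_zero
  rw [isChunk_ncard h]
  positivity

/-- candidate chunk positions -/
noncomputable def cands (X : Type*) [MetricSpace X] [Fintype X] (Q : ℝ) (n : ℕ) :
    Finset (Finset X) :=
  Finset.univ.filter (fun A => IsChunk Q Set.univ n (A : Set X))

/-- candidate chunk positions containing a given point -/
noncomputable def candsAt (X : Type*) [MetricSpace X] [Fintype X] (Q : ℝ) (n : ℕ) (v : X) :
    Finset (Finset X) :=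
  (cands X Q n).filter (fun A => v ∈ A)

lemma mem_cands {n : ℕ} {A : Finset X} :
    A ∈ cands X Q n ↔ IsChunk Q Set.univ n (A : Set X) := by
  simp [cands]

lemma mem_candsAt {n : ℕ} {A : Finset X} {v : X} :
    A ∈ candsAt X Q n v ↔ IsChunk Q Set.univ n (A : Set X) ∧ v ∈ A := by
  simp [candsAt, mem_cands]

lemma cylinder_measure (p : ℝ) (hp0 : 0 ≤ p) (hp1 : p ≤ 1) (A : Finset X) :
    bernoulliProduct X p {f | ∀ x ∈ A, f x = true} = ENNReal.ofReal p ^ A.card := by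
  have hmin : min (Real.toNNReal p) 1 = Real.toNNReal p :=
    min_eq_left (by simp [hp1])
  have hq : ∀ x : X,
      ((PMF.bernoulli (min (Real.toNNReal p) 1) (min_le_right _ _)).toMeasure : MeasureTheory.Measure Bool) {true}
        = ENNReal.ofReal p := by
    intro x
    rw [PMF.toMeasure_apply_singleton _ _ (measurableSet_singleton _)]
    simp [PMF.bernoulli, hmin, ENNReal.ofReal]
  have hpi : {f : X → Bool | ∀ x ∈ A, f x = true} =
      Set.pi Set.univ (fun x => if x ∈ A then {true} else Set.univ) := by
    ext f; simp only [Set.mem_setOf_eq, Set.mem_pi, Set.mem_univ, true_implies]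
    constructor
    · intro h x; split <;> simp_all
    · intro h x hx; have := h x; simp [hx] at this; exact this
  rw [bernoulliProduct, hpi, MeasureTheory.Measure.pi_pi]
  have : ∀ x : X,
      ((PMF.bernoulli (min (Real.toNNReal p) 1) (min_le_right _ _)).toMeasure : MeasureTheory.Measure Bool)
        (if x ∈ A then ({true} : Set Bool) else Set.univ) = if x ∈ A then ENNReal.ofReal p else 1 := by
    intro x; split
    · exact hq x
    · exact MeasureTheory.measure_univ
  simp only [this]
  rw [Finset.prod_ite_mem Finset.univ A (fun _ => ENNReal.ofReal p), Finset.univ_inter,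
    Finset.prod_const]

end Aux

set_option maxHeartbeats 2000000 in
theorem statement8 {X : Type*} [MetricSpace X] [Fintype X] (Q p d₀ c_B : ℝ)
    (hQ : 6 ≤ Q) (hp0 : 0 ≤ p) (hp1 : p ≤ 1) (hd : 1 ≤ d₀) (hc : 1 ≤ c_B)
    (hcover : ∀ (v : X) (r R : ℝ), 0 < r → r < R →
      ∃ U : Finset X, (U.card : ℝ) ≤ c_B * (R / r) ^ d₀ ∧
        Metric.ball v R ⊆ ⋃ u ∈ U, Metric.ball (u : X) r)
    (s : ℕ) (hs : s = Finset.univ.sup fun v : X => (Metric.ball v (1 / 2 : ℝ)).ncard)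
    (lam : ℝ) (hlam : lam = (2 * Q) ^ d₀ * c_B) (n : ℕ) :
    bernoulliProduct X p {f | ∃ C : Set X, IsChunk Q {x | f x = true} n C} ≤
      ENNReal.ofReal ((Fintype.card X : ℝ) * (lam ^ 2)⁻¹ * (lam ^ 2 * s * p) ^ 2 ^ n) := by
  classical
  -- trivial case: X empty
  rcases isEmpty_or_nonempty X with hX | hX
  · have hempty : {f : X → Bool | ∃ C : Set X, IsChunk Q {x | f x = true} n C} = ∅ := by
      ext f
      simp only [Set.mem_setOf_eq, Set.mem_empty_iff_false, iff_false, not_exists]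
      intro C hC
      obtain ⟨x, -⟩ := isChunk_nonempty hC
      exact IsEmpty.false x
    rw [hempty]
    simp
  -- basic facts
  have hQ0 : (0 : ℝ) < Q := by linarith
  have h2Q : (1 : ℝ) ≤ 2 * Q := by linarith
  have hd0 : (0 : ℝ) ≤ d₀ := by linarith
  have hlam1 : (1 : ℝ) ≤ lam := by
    rw [hlam]
    have h2 : (1 : ℝ) ≤ (2 * Q) ^ d₀ := by
      calc (1 : ℝ) = (2 * Q) ^ (0 : ℝ) := (Real.rpow_zero _).symm
        _ ≤ (2 * Q) ^ d₀ := Real.rpow_le_rpow_of_exponent_le h2Q hd0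
    nlinarith
  have hlam0 : (0 : ℝ) < lam := lt_of_lt_of_le one_pos hlam1
  have hsle : ∀ u : X, ((Metric.ball u (1/2 : ℝ)).ncard : ℝ) ≤ s := by
    intro u
    exact_mod_cast hs ▸ Finset.le_sup (Finset.mem_univ u)
  have hs1 : (1 : ℝ) ≤ s := by
    obtain ⟨u⟩ := hX
    have h1 : 0 < (Metric.ball u (1/2 : ℝ)).ncard :=
      (Set.ncard_pos (Set.toFinite _)).mpr ⟨u, by simp [Metric.mem_ball]⟩
    calc (1:ℝ) ≤ ((Metric.ball u (1/2:ℝ)).ncard : ℝ) := by exact_mod_cast h1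
      _ ≤ s := hsle u
  have hs0 : (0 : ℝ) < s := lt_of_lt_of_le one_pos hs1
  -- ball cardinality bound
  have hball : ∀ (v : X) (m : ℕ),
      (((Metric.ball v (Q ^ (m+1))).toFinset).card : ℝ) ≤ lam ^ (m+1) * s := by
    intro v m
    have hQm : (6 : ℝ) ≤ Q ^ (m+1) := by
      calc (6:ℝ) = 6 ^ 1 := by norm_num
        _ ≤ 6 ^ (m+1) := pow_le_pow_right₀ (by norm_num) (by omega)
        _ ≤ Q ^ (m+1) := pow_le_pow_left₀ (by norm_num) hQ _
    obtain ⟨U, hUcard, hUcov⟩ := hcover v (1/2) (Q ^ (m+1)) (by norm_num) (by linarith)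
    have hsub : (Metric.ball v (Q ^ (m+1))).toFinset ⊆
        U.biUnion (fun u => (Metric.ball u (1/2 : ℝ)).toFinset) := by
      intro x hx
      rw [Set.mem_toFinset] at hx
      obtain ⟨u, hu, hxu⟩ := Set.mem_iUnion₂.mp (hUcov hx)
      exact Finset.mem_biUnion.mpr ⟨u, hu, Set.mem_toFinset.mpr hxu⟩
    have h1 : ((Metric.ball v (Q ^ (m+1))).toFinset.card : ℝ) ≤
        ∑ u ∈ U, ((Metric.ball u (1/2 : ℝ)).toFinset.card : ℝ) := by
      have := le_trans (Finset.card_le_card hsub) (Finset.card_biUnion_le)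
      exact_mod_cast this
    have h2 : ∀ u : X, ((Metric.ball u (1/2 : ℝ)).toFinset.card : ℝ) ≤ s := by
      intro u
      rw [← Set.ncard_eq_toFinset_card']
      exact hsle u
    have h3 : (U.card : ℝ) * s ≤ lam ^ (m+1) * s := by
      have e0 : Q ^ (m+1) / (1/2 : ℝ) = 2 * Q ^ (m+1) := by ring
      have e1 : (2 * Q ^ (m+1) : ℝ) ≤ (2*Q) ^ (m+1) := by
        rw [mul_pow]
        have h2m : (2:ℝ) ≤ 2 ^ (m+1) := by
          calc (2:ℝ) = 2 ^ 1 := by norm_num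
            _ ≤ 2 ^ (m+1) := pow_le_pow_right₀ (by norm_num) (by omega)
        have hQp : (0:ℝ) < Q ^ (m+1) := by positivity
        nlinarith
      have e2 : (2 * Q ^ (m+1) : ℝ) ^ d₀ ≤ ((2*Q) ^ (m+1) : ℝ) ^ d₀ :=
        Real.rpow_le_rpow (by positivity) e1 hd0
      have e3 : (((2*Q) ^ (m+1) : ℝ)) ^ d₀ = ((2*Q) ^ d₀) ^ (m+1) := by
        rw [← Real.rpow_natCast (2*Q) (m+1), ← Real.rpow_natCast ((2*Q) ^ d₀) (m+1),
          ← Real.rpow_mul (by linarith : (0:ℝ) ≤ 2*Q), ← Real.rpow_mul (by linarith : (0:ℝ) ≤ 2*Q)]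
        congr 1
        ring
      have e4 : c_B * ((2*Q) ^ d₀) ^ (m+1) ≤ lam ^ (m+1) := by
        rw [hlam, mul_pow]
        have hcB : c_B ≤ c_B ^ (m+1) := le_self_pow₀ (by linarith) (by omega)
        have hpos : (0:ℝ) ≤ ((2*Q) ^ d₀) ^ (m+1) := by positivity
        nlinarith
      have hU2 : (U.card : ℝ) ≤ lam ^ (m+1) := by
        rw [e0] at hUcard
        calc (U.card : ℝ) ≤ c_B * (2 * Q ^ (m+1)) ^ d₀ := hUcard
          _ ≤ c_B * ((2*Q) ^ (m+1)) ^ d₀ := by nlinarith [e2]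
          _ = c_B * ((2*Q) ^ d₀) ^ (m+1) := by rw [e3]
          _ ≤ lam ^ (m+1) := e4
      nlinarith
    calc ((Metric.ball v (Q ^ (m+1))).toFinset.card : ℝ)
        ≤ ∑ u ∈ U, ((Metric.ball u (1/2 : ℝ)).toFinset.card : ℝ) := h1
      _ ≤ ∑ _u ∈ U, (s : ℝ) := Finset.sum_le_sum fun u _ => h2 u
      _ = (U.card : ℝ) * s := by rw [Finset.sum_const, nsmul_eq_mul]
      _ ≤ lam ^ (m+1) * s := h3
  -- counting bound by induction
  have key : ∀ (m : ℕ) (v : X),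
      ((candsAt X Q m v).card : ℝ) ≤ (s : ℝ) ^ (2 ^ m - 1) * lam ^ (2 ^ (m+1) - m - 2) := by
    intro m
    induction m with
    | zero =>
      intro v
      have hsub : candsAt X Q 0 v ⊆ {{v}} := by
        intro A hA
        rw [mem_candsAt] at hA
        obtain ⟨⟨x, -, hx⟩, hv⟩ := hA
        have hAx : A = {x} := Finset.coe_injective (by rw [hx]; simp)
        have : v = x := by
          rw [hAx] at hv
          simpa using hv
        simp [Finset.mem_singleton, hAx, this]
      have hc1 : (candsAt X Q 0 v).card ≤ 1 := by
        simpa using Finset.card_le_card hsub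
      norm_num
      exact_mod_cast hc1
    | succ m ih =>
      intro v
      -- decomposition map
      have hdec : ∀ A : Finset X, ∃ t : Finset X × X × Finset X,
          A ∈ candsAt X Q (m+1) v →
            t.1 ∈ candsAt X Q m v ∧ t.2.1 ∈ (Metric.ball v (Q ^ (m+1))).toFinset ∧
            t.2.2 ∈ candsAt X Q m t.2.1 ∧ (A : Set X) = ↑t.1 ∪ ↑t.2.2 := by
        intro A
        by_cases hA : A ∈ candsAt X Q (m+1) v
        swap
        · exact ⟨⟨∅, Classical.arbitrary X, ∅⟩, fun h => absurd h hA⟩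
        rw [mem_candsAt] at hA
        obtain ⟨⟨B, C, hB, hC, hdisj, hun, hdiam⟩, hv⟩ := hA
        have main : ∀ B C : Set X, IsChunk Q Set.univ m B → IsChunk Q Set.univ m C →
            (A : Set X) = B ∪ C → v ∈ B →
            ∃ t : Finset X × X × Finset X,
              t.1 ∈ candsAt X Q m v ∧ t.2.1 ∈ (Metric.ball v (Q ^ (m+1))).toFinset ∧
              t.2.2 ∈ candsAt X Q m t.2.1 ∧ (A : Set X) = ↑t.1 ∪ ↑t.2.2 := by
          intro B C hB hC hun hvB
          obtain ⟨u, hu⟩ := isChunk_nonempty hC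
          have huA : u ∈ (A : Set X) := by rw [hun]; exact Or.inr hu
          have hvA : v ∈ (A : Set X) := by rw [hun]; exact Or.inl hvB
          have hdvu : dist v u ≤ Q ^ (m+1) / 2 :=
            le_trans (Metric.dist_le_diam_of_mem (Set.toFinite _).isBounded hvA huA) hdiam
          have hQp : (0:ℝ) < Q ^ (m+1) := by positivity
          refine ⟨⟨(Set.toFinite B).toFinset, u, (Set.toFinite C).toFinset⟩, ?_, ?_, ?_, ?_⟩
          · rw [mem_candsAt]
            exact ⟨by rwa [Set.Finite.coe_toFinset], (Set.Finite.mem_toFinset _).mpr hvB⟩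
          · rw [Set.mem_toFinset, Metric.mem_ball, dist_comm]
            linarith
          · rw [mem_candsAt]
            exact ⟨by rwa [Set.Finite.coe_toFinset], (Set.Finite.mem_toFinset _).mpr hu⟩
          · rw [Set.Finite.coe_toFinset, Set.Finite.coe_toFinset]; exact hun
        have hvBC : v ∈ B ∪ C := by rw [← hun]; exact_mod_cast hv
        rcases hvBC with hvB | hvC
        · obtain ⟨t, ht⟩ := main B C hB hC hun hvB
          exact ⟨t, fun _ => ht⟩
        · obtain ⟨t, ht⟩ := main C B hC hB (by rw [hun, Set.union_comm]) hvC
          exact ⟨t, fun _ => ht⟩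
      choose φ hφ using hdec
      set T : Finset (Finset X × X × Finset X) :=
        (Metric.ball v (Q ^ (m+1))).toFinset.biUnion
          (fun u => ((candsAt X Q m v) ×ˢ (candsAt X Q m u)).image (fun bc => (bc.1, u, bc.2)))
        with hT
      have hmaps : ∀ A ∈ candsAt X Q (m+1) v, φ A ∈ T := by
        intro A hA
        obtain ⟨h1, h2, h3, h4⟩ := hφ A hA
        exact Finset.mem_biUnion.mpr ⟨(φ A).2.1, h2,
          Finset.mem_image.mpr ⟨((φ A).1, (φ A).2.2), Finset.mem_product.mpr ⟨h1, h3⟩, rfl⟩⟩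
      have hinj : Set.InjOn φ (candsAt X Q (m+1) v) := by
        intro A hA A' hA' heq
        apply Finset.coe_injective
        rw [(hφ A hA).2.2.2, (hφ A' hA').2.2.2, heq]
      have hcard : (candsAt X Q (m+1) v).card ≤ T.card :=
        Finset.card_le_card_of_injOn φ hmaps hinj
      have hTcard : (T.card : ℝ) ≤
          ((Metric.ball v (Q ^ (m+1))).toFinset.card : ℝ) *
            (((s : ℝ) ^ (2 ^ m - 1) * lam ^ (2 ^ (m+1) - m - 2)) *
              ((s : ℝ) ^ (2 ^ m - 1) * lam ^ (2 ^ (m+1) - m - 2))) := by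
        have hTn : T.card ≤ ∑ u ∈ (Metric.ball v (Q ^ (m+1))).toFinset,
            (candsAt X Q m v).card * (candsAt X Q m u).card := by
          refine le_trans Finset.card_biUnion_le (Finset.sum_le_sum fun u _ => ?_)
          calc (((candsAt X Q m v) ×ˢ (candsAt X Q m u)).image (fun bc => (bc.1, u, bc.2))).card
              ≤ ((candsAt X Q m v) ×ˢ (candsAt X Q m u)).card := Finset.card_image_le
            _ = (candsAt X Q m v).card * (candsAt X Q m u).card := Finset.card_product _ _
        have hF0 : (0:ℝ) ≤ (s : ℝ) ^ (2 ^ m - 1) * lam ^ (2 ^ (m+1) - m - 2) := by positivity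
        calc (T.card : ℝ)
            ≤ ∑ u ∈ (Metric.ball v (Q ^ (m+1))).toFinset,
                ((candsAt X Q m v).card : ℝ) * ((candsAt X Q m u).card : ℝ) := by
              exact_mod_cast hTn
          _ ≤ ∑ _u ∈ (Metric.ball v (Q ^ (m+1))).toFinset,
                ((s : ℝ) ^ (2 ^ m - 1) * lam ^ (2 ^ (m+1) - m - 2)) *
                  ((s : ℝ) ^ (2 ^ m - 1) * lam ^ (2 ^ (m+1) - m - 2)) := by
              refine Finset.sum_le_sum fun u _ => ?_
              exact mul_le_mul (ih v) (ih u) (Nat.cast_nonneg _) hF0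
          _ = ((Metric.ball v (Q ^ (m+1))).toFinset.card : ℝ) *
                (((s : ℝ) ^ (2 ^ m - 1) * lam ^ (2 ^ (m+1) - m - 2)) *
                  ((s : ℝ) ^ (2 ^ m - 1) * lam ^ (2 ^ (m+1) - m - 2))) := by
              rw [Finset.sum_const, nsmul_eq_mul]
      have hexp : lam ^ (m+1) * (s : ℝ) *
          (((s : ℝ) ^ (2 ^ m - 1) * lam ^ (2 ^ (m+1) - m - 2)) *
            ((s : ℝ) ^ (2 ^ m - 1) * lam ^ (2 ^ (m+1) - m - 2)))
          = (s : ℝ) ^ (2 ^ (m+1) - 1) * lam ^ (2 ^ (m+1+1) - (m+1) - 2) := by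
        have e1 : (2:ℕ) ^ (m+1) = 2 * 2 ^ m := by ring
        have e2 : (2:ℕ) ^ (m+2) = 2 * 2 ^ (m+1) := by ring
        have e3 : 1 ≤ (2:ℕ) ^ m := Nat.one_le_two_pow
        have e4 : m + 2 ≤ (2:ℕ) ^ (m+1) := Nat.lt_two_pow_self (n := m+1)
        have h1 : (2:ℕ) ^ (m+1) - 1 = 1 + ((2 ^ m - 1) + (2 ^ m - 1)) := by omega
        have h2 : (2:ℕ) ^ (m+1+1) - (m+1) - 2 =
            (m+1) + ((2 ^ (m+1) - m - 2) + (2 ^ (m+1) - m - 2)) := by omega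
        rw [h1, h2, pow_add, pow_add, pow_add, pow_add]
        ring
      calc ((candsAt X Q (m+1) v).card : ℝ)
          ≤ (T.card : ℝ) := by exact_mod_cast hcard
        _ ≤ ((Metric.ball v (Q ^ (m+1))).toFinset.card : ℝ) *
              (((s : ℝ) ^ (2 ^ m - 1) * lam ^ (2 ^ (m+1) - m - 2)) *
                ((s : ℝ) ^ (2 ^ m - 1) * lam ^ (2 ^ (m+1) - m - 2))) := hTcard
        _ ≤ lam ^ (m+1) * (s : ℝ) *
              (((s : ℝ) ^ (2 ^ m - 1) * lam ^ (2 ^ (m+1) - m - 2)) *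
                ((s : ℝ) ^ (2 ^ m - 1) * lam ^ (2 ^ (m+1) - m - 2))) := by
            have := hball v m
            have hF0 : (0:ℝ) ≤ ((s : ℝ) ^ (2 ^ m - 1) * lam ^ (2 ^ (m+1) - m - 2)) *
                ((s : ℝ) ^ (2 ^ m - 1) * lam ^ (2 ^ (m+1) - m - 2)) := by positivity
            nlinarith
        _ = (s : ℝ) ^ (2 ^ (m+1) - 1) * lam ^ (2 ^ (m+1+1) - (m+1) - 2) := hexp
  -- total count
  have total : ((cands X Q n).card : ℝ) ≤
      (Fintype.card X : ℝ) * ((s : ℝ) ^ (2 ^ n - 1) * lam ^ (2 ^ (n+1) - n - 2)) := by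
    have hsub : cands X Q n ⊆ Finset.univ.biUnion (fun v => candsAt X Q n v) := by
      intro A hA
      have hcardA : A.card = 2 ^ n := by
        rw [← Set.ncard_coe_finset]
        exact isChunk_ncard (mem_cands.mp hA)
      obtain ⟨x, hx⟩ := Finset.card_pos.mp (by rw [hcardA]; positivity)
      exact Finset.mem_biUnion.mpr ⟨x, Finset.mem_univ x,
        mem_candsAt.mpr ⟨mem_cands.mp hA, hx⟩⟩
    have h1 : (cands X Q n).card ≤ ∑ v : X, (candsAt X Q n v).card :=
      le_trans (Finset.card_le_card hsub) Finset.card_biUnion_le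
    calc ((cands X Q n).card : ℝ)
        ≤ ∑ v : X, ((candsAt X Q n v).card : ℝ) := by exact_mod_cast h1
      _ ≤ ∑ _v : X, ((s : ℝ) ^ (2 ^ n - 1) * lam ^ (2 ^ (n+1) - n - 2)) :=
          Finset.sum_le_sum fun v _ => key n v
      _ = (Fintype.card X : ℝ) * ((s : ℝ) ^ (2 ^ n - 1) * lam ^ (2 ^ (n+1) - n - 2)) := by
          rw [Finset.sum_const, nsmul_eq_mul, Finset.card_univ]
  -- measure bound
  have hsub : {f : X → Bool | ∃ C : Set X, IsChunk Q {x | f x = true} n C} ⊆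
      ⋃ A ∈ cands X Q n, {f : X → Bool | ∀ x ∈ A, f x = true} := by
    intro f ⟨C, hC⟩
    have hCfin : C.Finite := Set.toFinite C
    refine Set.mem_iUnion₂.mpr ⟨hCfin.toFinset, ?_, ?_⟩
    · rw [mem_cands, hCfin.coe_toFinset]; exact isChunk_univ hC
    · intro x hx
      rw [hCfin.mem_toFinset] at hx
      exact isChunk_subset hC hx
  calc bernoulliProduct X p {f | ∃ C : Set X, IsChunk Q {x | f x = true} n C}
      ≤ bernoulliProduct X p (⋃ A ∈ cands X Q n, {f : X → Bool | ∀ x ∈ A, f x = true}) :=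
        MeasureTheory.measure_mono hsub
    _ ≤ ∑ A ∈ cands X Q n, bernoulliProduct X p {f : X → Bool | ∀ x ∈ A, f x = true} :=
        MeasureTheory.measure_biUnion_finset_le _ _
    _ ≤ ENNReal.ofReal ((Fintype.card X : ℝ) * (lam ^ 2)⁻¹ * (lam ^ 2 * s * p) ^ 2 ^ n) := by
        have hcardA : ∀ A ∈ cands X Q n, A.card = 2 ^ n := by
          intro A hA
          rw [← Set.ncard_coe_finset]
          exact isChunk_ncard (mem_cands.mp hA)
        have hsum : ∑ A ∈ cands X Q n,
            bernoulliProduct X p {f : X → Bool | ∀ x ∈ A, f x = true}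
            = ((cands X Q n).card : ℝ≥0∞) * ENNReal.ofReal p ^ 2 ^ n := by
          rw [Finset.sum_congr rfl fun A hA => by
            rw [cylinder_measure p hp0 hp1 A, hcardA A hA]]
          rw [Finset.sum_const, nsmul_eq_mul]
        rw [hsum]
        have hofr : ((cands X Q n).card : ℝ≥0∞) * ENNReal.ofReal p ^ 2 ^ n
            = ENNReal.ofReal (((cands X Q n).card : ℝ) * p ^ 2 ^ n) := by
          rw [ENNReal.ofReal_mul (Nat.cast_nonneg _), ENNReal.ofReal_natCast,
            ENNReal.ofReal_pow hp0]
        rw [hofr]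
        apply ENNReal.ofReal_le_ofReal
        -- real inequality
        have hp2 : (0:ℝ) ≤ p ^ 2 ^ n := by positivity
        have e3 : 1 ≤ (2:ℕ) ^ n := Nat.one_le_two_pow
        have e4 : (2:ℕ) ≤ 2 ^ (n+1) := by
          calc (2:ℕ) = 2 ^ 1 := by norm_num
            _ ≤ 2 ^ (n+1) := Nat.pow_le_pow_right (by norm_num) (by omega)
        have hmid : ((cands X Q n).card : ℝ) * p ^ 2 ^ n ≤
            (Fintype.card X : ℝ) * ((s : ℝ) ^ (2 ^ n) * lam ^ (2 ^ (n+1) - 2)) * p ^ 2 ^ n := by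
          have hF2 : (s : ℝ) ^ (2 ^ n - 1) * lam ^ (2 ^ (n+1) - n - 2) ≤
              (s : ℝ) ^ (2 ^ n) * lam ^ (2 ^ (n+1) - 2) := by
            have b1 : (s : ℝ) ^ (2 ^ n - 1) ≤ (s : ℝ) ^ (2 ^ n) :=
              pow_le_pow_right₀ hs1 (Nat.sub_le _ _)
            have b2 : lam ^ (2 ^ (n+1) - n - 2) ≤ lam ^ (2 ^ (n+1) - 2) :=
              pow_le_pow_right₀ hlam1 (by have := Nat.lt_two_pow_self (n := n+1); omega)
            have c1 : (0:ℝ) ≤ (s : ℝ) ^ (2 ^ n - 1) := by positivity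
            have c2 : (0:ℝ) ≤ lam ^ (2 ^ (n+1) - n - 2) := by positivity
            nlinarith
          have := total
          have hX0 : (0:ℝ) ≤ (Fintype.card X : ℝ) := Nat.cast_nonneg _
          nlinarith [mul_le_mul_of_nonneg_left hF2 hX0]
        have heq : (Fintype.card X : ℝ) * ((s : ℝ) ^ (2 ^ n) * lam ^ (2 ^ (n+1) - 2)) * p ^ 2 ^ n
            = (Fintype.card X : ℝ) * (lam ^ 2)⁻¹ * (lam ^ 2 * s * p) ^ 2 ^ n := by
          have hpowsplit : lam ^ (2 ^ (n+1)) = lam ^ 2 * lam ^ (2 ^ (n+1) - 2) := by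
            rw [← pow_add, Nat.add_sub_cancel' e4]
          have hexp : (lam ^ 2 * s * p) ^ 2 ^ n
              = lam ^ (2 ^ (n+1)) * (s : ℝ) ^ (2 ^ n) * p ^ 2 ^ n := by
            rw [mul_pow, mul_pow, ← pow_mul,
              show 2 * 2 ^ n = 2 ^ (n+1) from by ring]
          rw [hexp, hpowsplit]
          have hne : lam ^ 2 ≠ 0 := by positivity
          field_simp
        linarith
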